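/- Let b₀, b₁ > 0, b₂, b₃ < 0 with b₀ + b₁ + b₂ + b₃ = 0 and b₀ + b₃ ≤ 0, and ζ₀, ζ₁ ∈ [0,1]. Define μ_η(λ) piecewise by μ_η(λ) = (ζ₀(b₁ + b₂ + λ) - ζ₁ b₁)/(b₂ + λ) for λ ∈ [b₃, b₀ + b₃], μ_η(λ) = ζ₁ for λ ∈ [b₀ + b₃, 0], and μ_η(λ) = (ζ₀ b₀ - ζ₁(b₀ + b₃ - λ))/(λ - b₃) for λ ∈ (0, -b₂]. Then μ_η(λ) ∈ [0,1] for all λ in its domain, and μ_η is continuous on [b₃, -b₂] \ {0}, with a jump at λ = 0 unless ζ₀ b₀ = ζ₁ b₀. -/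

import Mathlib

open Set Filter Topology

/-- The explicit piecewise root curve `μ_η` of the composition-gap function for the
single-cycle example network takes values in `[0,1]`, is continuous away from `λ = 0`,
and jumps at `λ = 0` unless `ζ₀ b₀ = ζ₁ b₀`. -/
theorem stmt18 (b0 b1 b2 b3 zeta0 zeta1 : ℝ)
    (hb0 : 0 < b0) (hb1 : 0 < b1) (hb2 : b2 < 0) (hb3 : b3 < 0)
    (hsum : b0 + b1 + b2 + b3 = 0) (hb03 : b0 + b3 ≤ 0)
    (hzeta0 : zeta0 ∈ Set.Icc (0 : ℝ) 1) (hzeta1 : zeta1 ∈ Set.Icc (0 : ℝ) 1) :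
    (∀ lam ∈ Set.Icc b3 (-b2),
      (if lam ≤ b0 + b3 then (zeta0 * (b1 + b2 + lam) - zeta1 * b1) / (b2 + lam)
        else if lam ≤ 0 then zeta1
        else (zeta0 * b0 - zeta1 * (b0 + b3 - lam)) / (lam - b3)) ∈ Set.Icc (0 : ℝ) 1) ∧
    ContinuousOn (fun lam : ℝ =>
      if lam ≤ b0 + b3 then (zeta0 * (b1 + b2 + lam) - zeta1 * b1) / (b2 + lam)
        else if lam ≤ 0 then zeta1
        else (zeta0 * b0 - zeta1 * (b0 + b3 - lam)) / (lam - b3))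
      (Set.Icc b3 (-b2) \ {0}) ∧
    (zeta0 * b0 ≠ zeta1 * b0 →
      ¬ContinuousWithinAt (fun lam : ℝ =>
        if lam ≤ b0 + b3 then (zeta0 * (b1 + b2 + lam) - zeta1 * b1) / (b2 + lam)
          else if lam ≤ 0 then zeta1
          else (zeta0 * b0 - zeta1 * (b0 + b3 - lam)) / (lam - b3))
        (Set.Icc b3 (-b2)) 0) := by
  obtain ⟨hz00, hz01⟩ := hzeta0
  obtain ⟨hz10, hz11⟩ := hzeta1
  have hb1' : b1 ≠ 0 := ne_of_gt hb1
  set f : ℝ → ℝ := fun lam =>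
    if lam ≤ b0 + b3 then (zeta0 * (b1 + b2 + lam) - zeta1 * b1) / (b2 + lam)
      else if lam ≤ 0 then zeta1
      else (zeta0 * b0 - zeta1 * (b0 + b3 - lam)) / (lam - b3) with hfdef
  -- continuity of the two rational branches
  have hg1 : ∀ x : ℝ, b2 + x ≠ 0 →
      ContinuousAt (fun lam => (zeta0 * (b1 + b2 + lam) - zeta1 * b1) / (b2 + lam)) x :=
    fun x hx => ContinuousAt.div (by fun_prop) (by fun_prop) hx
  have hg3 : ∀ x : ℝ, x - b3 ≠ 0 →
      ContinuousAt (fun lam => (zeta0 * b0 - zeta1 * (b0 + b3 - lam)) / (lam - b3)) x :=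
    fun x hx => ContinuousAt.div (by fun_prop) (by fun_prop) hx
  have hfval : f (b0 + b3) = zeta1 := by
    simp only [hfdef, if_pos le_rfl]
    have e1 : b1 + b2 + (b0 + b3) = 0 := by linarith
    have e2 : b2 + (b0 + b3) = -b1 := by linarith
    rw [e1, e2]
    field_simp
    ring
  refine ⟨?_, ?_, ?_⟩
  · -- range in [0,1]
    intro lam hlam
    obtain ⟨hl1, hl2⟩ := hlam
    by_cases h1 : lam ≤ b0 + b3
    · have hd : b2 + lam < 0 := by linarith
      have hnum : zeta0 * (b1 + b2 + lam) - zeta1 * b1 ≤ 0 := by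
        nlinarith [mul_nonneg hz00 (show (0:ℝ) ≤ -(b1 + b2 + lam) by linarith),
          mul_nonneg hz10 hb1.le]
      rw [if_pos h1]
      constructor
      · have h := div_nonneg (neg_nonneg.2 hnum) (neg_nonneg.2 hd.le)
        rwa [neg_div_neg_eq] at h
      · have e : (zeta0 * (b1 + b2 + lam) - zeta1 * b1) / (b2 + lam)
            = (-(zeta0 * (b1 + b2 + lam) - zeta1 * b1)) / (-(b2 + lam)) :=
          (neg_div_neg_eq _ _).symm
        rw [e, div_le_one (by linarith)]
        nlinarith [mul_nonneg (show (0:ℝ) ≤ 1 - zeta0 by linarith)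
            (show (0:ℝ) ≤ -(b1 + b2 + lam) by linarith),
          mul_nonneg (show (0:ℝ) ≤ 1 - zeta1 by linarith) hb1.le]
    · rw [if_neg h1]
      by_cases h2 : lam ≤ 0
      · rw [if_pos h2]; exact ⟨hz10, hz11⟩
      · rw [if_neg h2]
        push_neg at h2
        have hd : 0 < lam - b3 := by linarith
        constructor
        · apply div_nonneg _ hd.le
          nlinarith [mul_nonneg hz00 hb0.le,
            mul_nonneg hz10 (show (0:ℝ) ≤ lam - (b0 + b3) by linarith)]
        · rw [div_le_one hd]
          nlinarith [mul_nonneg (show (0:ℝ) ≤ 1 - zeta0 by linarith) hb0.le,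
            mul_nonneg (show (0:ℝ) ≤ 1 - zeta1 by linarith)
              (show (0:ℝ) ≤ lam - (b0 + b3) by linarith)]
  · -- continuity away from 0
    intro x hx
    obtain ⟨⟨hx1, hx2⟩, hx0⟩ := hx
    have hx0' : x ≠ 0 := by simpa using hx0
    rcases lt_or_gt_of_ne hx0' with hneg | hpos
    · rcases lt_trichotomy x (b0 + b3) with h | h | h
      · -- x < b0 + b3 : first branch
        have hmem : Iio (b0 + b3) ∈ 𝓝 x := Iio_mem_nhds h
        have hc : ContinuousAt f x := by
          refine (hg1 x (by linarith)).congr ?_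
          filter_upwards [hmem] with y hy
          simp only [hfdef]
          rw [if_pos (le_of_lt (mem_Iio.mp hy))]
        exact hc.continuousWithinAt
      · -- x = b0 + b3 : breakpoint
        subst h
        have hA : ContinuousWithinAt f (Iic (b0 + b3)) (b0 + b3) := by
          refine ((hg1 (b0 + b3) (by intro hc; linarith)).continuousWithinAt).congr
            (fun y hy => ?_) ?_
          · simp only [hfdef, if_pos (mem_Iic.mp hy)]
          · simp only [hfdef, if_pos le_rfl]
        have hB : ContinuousWithinAt f (Ioi (b0 + b3) ∩ Iio 0) (b0 + b3) := by
          refine continuousWithinAt_const.congr (fun y hy => ?_) hfval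
          simp only [hfdef]
          rw [if_neg (not_le.2 (mem_Ioi.mp hy.1)), if_pos (mem_Iio.mp hy.2).le]
        have hAB := hA.union hB
        refine hAB.mono_of_mem_nhdsWithin ?_
        have hIio : Iio (0:ℝ) ∈ 𝓝[Icc b3 (-b2) \ {0}] (b0 + b3) :=
          mem_nhdsWithin_of_mem_nhds (Iio_mem_nhds hneg)
        refine mem_of_superset (inter_mem hIio self_mem_nhdsWithin) ?_
        rintro y ⟨hy0, -⟩
        by_cases hy : y ≤ b0 + b3
        · exact Or.inl hy
        · exact Or.inr ⟨not_le.1 hy, hy0⟩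
      · -- b0 + b3 < x < 0 : constant branch
        have hmem : Ioo (b0 + b3) 0 ∈ 𝓝 x := Ioo_mem_nhds h hneg
        have hc : ContinuousAt f x := by
          refine (continuousAt_const : ContinuousAt (fun _ : ℝ => zeta1) x).congr ?_
          filter_upwards [hmem] with y hy
          simp only [hfdef]
          rw [if_neg (not_le.2 hy.1), if_pos hy.2.le]
        exact hc.continuousWithinAt
    · -- x > 0 : third branch
      have hmem : Ioi (0:ℝ) ∈ 𝓝 x := Ioi_mem_nhds hpos
      have hc : ContinuousAt f x := by
        refine (hg3 x (by linarith)).congr ?_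
        filter_upwards [hmem] with y hy
        have h1 : ¬ y ≤ b0 + b3 := not_le.2 (lt_of_le_of_lt hb03 hy)
        simp only [hfdef, if_neg h1, if_neg (not_le.2 (mem_Ioi.mp hy))]
      exact hc.continuousWithinAt
  · -- jump at 0
    intro hne hcont
    have hf0 : f 0 = zeta1 := by
      by_cases h : (0:ℝ) ≤ b0 + b3
      · have h0 : b0 + b3 = 0 := le_antisymm hb03 h
        have := hfval
        rwa [h0] at this
      · simp only [hfdef, if_neg h, if_pos le_rfl]
    have hIoc : Ioc (0:ℝ) (-b2) ∈ 𝓝[>] (0:ℝ) :=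
      Ioc_mem_nhdsGT_of_mem ⟨le_refl _, by linarith⟩
    have hle : 𝓝[>] (0:ℝ) ≤ 𝓝[Icc b3 (-b2)] 0 :=
      nhdsWithin_le_of_mem (mem_of_superset hIoc (fun y hy => ⟨by linarith [hy.1], hy.2⟩))
    have ht1 : Tendsto f (𝓝[>] (0:ℝ)) (𝓝 zeta1) := by
      rw [← hf0]; exact hcont.mono_left hle
    have heq : f =ᶠ[𝓝[>] (0:ℝ)]
        (fun lam => (zeta0 * b0 - zeta1 * (b0 + b3 - lam)) / (lam - b3)) := by
      filter_upwards [self_mem_nhdsWithin] with y hy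
      have hy' : (0:ℝ) < y := hy
      have h1 : ¬ y ≤ b0 + b3 := not_le.2 (lt_of_le_of_lt hb03 hy')
      simp only [hfdef, if_neg h1, if_neg (not_le.2 hy')]
    have ht2 : Tendsto (fun lam => (zeta0 * b0 - zeta1 * (b0 + b3 - lam)) / (lam - b3))
        (𝓝[>] (0:ℝ)) (𝓝 zeta1) := ht1.congr' heq
    have ht3 : Tendsto (fun lam => (zeta0 * b0 - zeta1 * (b0 + b3 - lam)) / (lam - b3))
        (𝓝[>] (0:ℝ)) (𝓝 ((zeta0 * b0 - zeta1 * (b0 + b3 - 0)) / (0 - b3))) :=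
      (hg3 0 (by linarith)).mono_left nhdsWithin_le_nhds
    have huniq := tendsto_nhds_unique ht2 ht3
    have hb3' : (0:ℝ) - b3 ≠ 0 := by linarith
    apply hne
    rw [eq_div_iff hb3'] at huniq
    ring_nf at huniq ⊢
    linarith
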